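/- Let f : ℝ^{n_z} × ℝ^{n_u} → ℝ^{n_z} be polynomial and let π : ℝ^{n_z} → ℝ^{n_u} be a feed-forward fully-connected neural network with continuous activation φ, with f(0, π(0)) = 0. Let x : ℝ^{n_z} → ℝᴺ be the concatenation of the hidden-layer states of the network and X(z) = (x(z), z). Let d₁,…,d_{n_d} : ℝ^{n_z} → ℝ be polynomial and D^z = {z : d_k(z) ≥ 0 for all k}, and assume D^z contains an open neighborhood of the origin. Suppose g₁,…,g_p, h₁,…,h_q are polynomial functions on ℝ^{N+n_z} with g_i(X(z)) ≥ 0 and h_j(X(z)) = 0 for all z ∈ D^z and all i, j. Suppose there exist polynomial functions V with V(0) = 0, ρ with ρ(0) = 0 and ρ(z) > 0 for z ≠ 0, SOS functions p₁,…,p_{n_d} and s₁,…,s_p on ℝ^{N+n_z}, and polynomial functions t₁,…,t_q, such that V − ρ is SOS and X = (x,z) ↦ −∇V(z)·f(z, W^ℓx^ℓ + b^ℓ) − Σ_k p_k(X)d_k(z) − Σ_j t_j(X)h_j(X) − Σ_i s_i(X)g_i(X) is SOS. Then the origin is a stable equilibrium of the closed loop ż = f(z, π(z)): for every sufficiently small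 ε > 0 there exists δ > 0 such that every differentiable z : [0,∞) → ℝ^{n_z} with z'(t) = f(z(t), π(z(t))) for all t ≥ 0 and ‖z(0)‖ < δ satisfies ‖z(t)‖ < ε for all t ≥ 0. -/

import Mathlib

/-- The state `xᵏ` of a feed-forward fully-connected neural network with activation `φ`,
layer dimensions `dims`, weights `W` and biases `b`: `x⁰ = z` and
`x^{k+1} = φ (Wᵏ xᵏ + bᵏ)` componentwise. -/
noncomputable def netState (φ : ℝ → ℝ) (dims : ℕ → ℕ)
    (W : ∀ k : ℕ, Matrix (Fin (dims (k + 1))) (Fin (dims k)) ℝ)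
    (b : ∀ k : ℕ, Fin (dims (k + 1)) → ℝ) :
    (k : ℕ) → (Fin (dims 0) → ℝ) → Fin (dims k) → ℝ
  | 0, z => z
  | k + 1, z => fun i => φ ((W k).mulVec (netState φ dims W b k z) i + b k i)

/-- Index type for the joint variable `X = (x, z)` consisting of all hidden-layer states
`x¹, …, x^{L+1}` (layers `ℓ = L + 1`) together with the network input `z`. -/
def NetIdx (dims : ℕ → ℕ) (L : ℕ) : Type :=
  (Σ k : Fin (L + 1), Fin (dims (k.1 + 1))) ⊕ Fin (dims 0)

/-- The concatenation `X(z) = (x(z), z)` of all hidden-layer states with the input. -/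
noncomputable def netX (φ : ℝ → ℝ) (dims : ℕ → ℕ)
    (W : ∀ k : ℕ, Matrix (Fin (dims (k + 1))) (Fin (dims k)) ℝ)
    (b : ∀ k : ℕ, Fin (dims (k + 1)) → ℝ) (L : ℕ)
    (z : Fin (dims 0) → ℝ) : NetIdx dims L → ℝ :=
  Sum.elim (fun s => netState φ dims W b (s.1.1 + 1) z s.2) z

/-- A function `(σ → ℝ) → ℝ` is a polynomial function. -/
def IsPolyFun {σ : Type*} (g : (σ → ℝ) → ℝ) : Prop :=
  ∃ P : MvPolynomial σ ℝ, ∀ x, g x = MvPolynomial.eval x P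

/-- A function `(σ → ℝ) → ℝ` is a sum of squares (SOS) of polynomial functions. -/
def IsSOSFun {σ : Type*} (g : (σ → ℝ) → ℝ) : Prop :=
  ∃ (m : ℕ) (r : Fin m → MvPolynomial σ ℝ),
    ∀ x, g x = ∑ i, (MvPolynomial.eval x (r i)) ^ 2

lemma sosNonneg {σ : Type*} {g : (σ → ℝ) → ℝ} (hsos : IsSOSFun g) (x : σ → ℝ) : 0 ≤ g x := by
  obtain ⟨m, r, hr⟩ := hsos
  rw [hr]
  exact Finset.sum_nonneg fun i _ => sq_nonneg _

lemma polyDiffE {n : ℕ} (P : MvPolynomial (Fin n) ℝ) :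
    Differentiable ℝ (fun x : EuclideanSpace ℝ (Fin n) => MvPolynomial.eval x P) := by
  induction P using MvPolynomial.induction_on with
  | C a => simpa using differentiable_const (a : ℝ)
  | add p q hp hq => simp only [map_add]; exact fun x => (hp x).add (hq x)
  | mul_X p i hp =>
      simp only [map_mul, MvPolynomial.eval_X]
      exact hp.mul (EuclideanSpace.proj (𝕜 := ℝ) (ι := Fin n) i).differentiable

lemma polyDiff {n : ℕ} {V : EuclideanSpace ℝ (Fin n) → ℝ}
    (hV : IsPolyFun fun z : Fin n → ℝ => V (WithLp.toLp 2 z)) : Differentiable ℝ V := by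
  obtain ⟨P, hP⟩ := hV
  have : V = fun x : EuclideanSpace ℝ (Fin n) => MvPolynomial.eval x P := funext fun x => hP x
  rw [this]; exact polyDiffE P

/-- **SOS certificate for local stability of a neural feedback loop.**
Given a polynomial plant `ż = f(z, u)` in feedback with an `(L+1)`-layer neural network
controller `π`, a region `D^z = {z | dₖ(z) ≥ 0}` containing a neighbourhood of the origin,
and polynomial constraints `gᵢ(X(z)) ≥ 0`, `hⱼ(X(z)) = 0` valid for `z ∈ D^z`, if there are
polynomial `V` (with `V 0 = 0`), a positive definite polynomial `ρ`, SOS multipliers `pₖ`,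
`sᵢ` and polynomial multipliers `tⱼ` such that `V − ρ` is SOS and
`X ↦ −∇V(z)·f(z, W^ℓ x^ℓ + b^ℓ) − Σₖ pₖ(X) dₖ(z) − Σⱼ tⱼ(X) hⱼ(X) − Σᵢ sᵢ(X) gᵢ(X)` is SOS,
then the origin is a stable equilibrium of the closed loop: for every sufficiently small
`ε > 0` there is `δ > 0` as in the definition of stability. -/
theorem stmt_7 {nu L p q nd : ℕ} (dims : ℕ → ℕ) (φ : ℝ → ℝ) (hφ : Continuous φ)
    (W : ∀ k : ℕ, Matrix (Fin (dims (k + 1))) (Fin (dims k)) ℝ)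
    (b : ∀ k : ℕ, Fin (dims (k + 1)) → ℝ)
    (Wout : Matrix (Fin nu) (Fin (dims (L + 1))) ℝ) (bout : Fin nu → ℝ)
    (π : EuclideanSpace ℝ (Fin (dims 0)) → EuclideanSpace ℝ (Fin nu))
    (hπ : ∀ z, π z = fun i => Wout.mulVec (netState φ dims W b (L + 1) z) i + bout i)
    (f : EuclideanSpace ℝ (Fin (dims 0)) → EuclideanSpace ℝ (Fin nu) →
      EuclideanSpace ℝ (Fin (dims 0)))
    (hf : ∀ i : Fin (dims 0), ∃ P : MvPolynomial (Fin (dims 0) ⊕ Fin nu) ℝ,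
        ∀ z u, f z u i = MvPolynomial.eval (Sum.elim z u) P)
    (hequil : f 0 (π 0) = 0)
    (d : Fin nd → EuclideanSpace ℝ (Fin (dims 0)) → ℝ)
    (hdpoly : ∀ k, IsPolyFun fun z : Fin (dims 0) → ℝ => d k (WithLp.toLp 2 z))
    (hDnhds : {z : EuclideanSpace ℝ (Fin (dims 0)) | ∀ k, 0 ≤ d k z} ∈ nhds 0)
    (g : Fin p → (NetIdx dims L → ℝ) → ℝ) (hgpoly : ∀ i, IsPolyFun (g i))
    (h : Fin q → (NetIdx dims L → ℝ) → ℝ) (hhpoly : ∀ j, IsPolyFun (h j))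
    (hg : ∀ i z, (∀ k, 0 ≤ d k z) → 0 ≤ g i (netX φ dims W b L z))
    (hh : ∀ j z, (∀ k, 0 ≤ d k z) → h j (netX φ dims W b L z) = 0)
    (V : EuclideanSpace ℝ (Fin (dims 0)) → ℝ)
    (hVpoly : IsPolyFun fun z : Fin (dims 0) → ℝ => V (WithLp.toLp 2 z)) (hV0 : V 0 = 0)
    (ρ : EuclideanSpace ℝ (Fin (dims 0)) → ℝ)
    (hρpoly : IsPolyFun fun z : Fin (dims 0) → ℝ => ρ (WithLp.toLp 2 z))
    (hρ0 : ρ 0 = 0) (hρpos : ∀ z : EuclideanSpace ℝ (Fin (dims 0)), z ≠ 0 → 0 < ρ z)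
    (hVρ : IsSOSFun fun z : Fin (dims 0) → ℝ => V (WithLp.toLp 2 z) - ρ (WithLp.toLp 2 z))
    (pm : Fin nd → (NetIdx dims L → ℝ) → ℝ) (hpm : ∀ k, IsSOSFun (pm k))
    (s : Fin p → (NetIdx dims L → ℝ) → ℝ) (hs : ∀ i, IsSOSFun (s i))
    (t : Fin q → (NetIdx dims L → ℝ) → ℝ) (ht : ∀ j, IsPolyFun (t j))
    (hmain : IsSOSFun fun X : NetIdx dims L → ℝ =>
      -(inner ℝ (gradient V (WithLp.toLp 2 fun i => X (Sum.inr i)))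
          (f (WithLp.toLp 2 fun i => X (Sum.inr i))
            (WithLp.toLp 2 fun i => Wout.mulVec (fun j => X (Sum.inl ⟨⟨L, Nat.lt_succ_self L⟩, j⟩)) i
              + bout i)) : ℝ)
      - ∑ k, pm k X * d k (WithLp.toLp 2 fun i => X (Sum.inr i))
      - ∑ j, t j X * h j X - ∑ i, s i X * g i X) :
    ∃ ε₀ > 0, ∀ ε, 0 < ε → ε ≤ ε₀ →
      ∃ δ > 0, ∀ z : ℝ → EuclideanSpace ℝ (Fin (dims 0)),
        (∀ τ, 0 ≤ τ → HasDerivAt z (f (z τ) (π (z τ))) τ) →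
        ‖z 0‖ < δ → ∀ τ, 0 ≤ τ → ‖z τ‖ < ε := by
  classical
  have hVdiff : Differentiable ℝ V := polyDiff hVpoly
  have hVcont : Continuous V := hVdiff.continuous
  have hVρ' : ∀ z : EuclideanSpace ℝ (Fin (dims 0)), ρ z ≤ V z := fun z => by
    have := sosNonneg hVρ z; linarith
  -- key Lyapunov decrease inequality
  have key : ∀ z : EuclideanSpace ℝ (Fin (dims 0)), (∀ k, 0 ≤ d k z) →
      (inner ℝ (gradient V z) (f z (π z)) : ℝ) ≤ 0 := by
    intro z hz
    set X := netX φ dims W b L z with hXdef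
    have h1 : 0 ≤ -(inner ℝ (gradient V z) (f z (π z)) : ℝ)
        - ∑ k, pm k X * d k z - ∑ j, t j X * h j X - ∑ i, s i X * g i X := by
      have h0 := sosNonneg hmain X
      rw [show π z = WithLp.toLp 2 (π z).ofLp from rfl, hπ]
      exact h0
    have hpd : 0 ≤ ∑ k, pm k X * d k z :=
      Finset.sum_nonneg fun k _ => mul_nonneg (sosNonneg (hpm k) X) (hz k)
    have hth : ∑ j, t j X * h j X = 0 :=
      Finset.sum_eq_zero fun j _ => by rw [hh j z hz, mul_zero]
    have hsg : 0 ≤ ∑ i, s i X * g i X :=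
      Finset.sum_nonneg fun i _ => mul_nonneg (sosNonneg (hs i) X) (hg i z hz)
    linarith
  obtain ⟨r, hr, hball⟩ := Metric.mem_nhds_iff.mp hDnhds
  refine ⟨r, hr, ?_⟩
  intro ε hε hεr
  rcases subsingleton_or_nontrivial (EuclideanSpace ℝ (Fin (dims 0))) with hsub | hnt
  · refine ⟨1, one_pos, fun z _ _ τ _ => ?_⟩
    have : z τ = 0 := Subsingleton.elim _ _
    rw [this]; simpa using hε
  · -- minimum of V on the sphere of radius ε
    obtain ⟨z₀, hz₀s, hz₀min⟩ := (isCompact_sphere (0 : EuclideanSpace ℝ (Fin (dims 0))) ε).exists_isMinOn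
      (NormedSpace.sphere_nonempty.mpr hε.le) hVcont.continuousOn
    have hz₀norm : ‖z₀‖ = ε := by simpa using hz₀s
    have hz₀ne : z₀ ≠ 0 := by
      intro h0; rw [h0, norm_zero] at hz₀norm; exact absurd hz₀norm.symm hε.ne'
    set m := V z₀ with hm_def
    have hm : 0 < m := lt_of_lt_of_le (hρpos z₀ hz₀ne) (hVρ' z₀)
    obtain ⟨δ, hδ, hδV⟩ := Metric.continuousAt_iff.mp hVcont.continuousAt m hm
    refine ⟨min δ ε, lt_min hδ hε, ?_⟩
    intro z hz hz0
    by_contra hcon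
    push_neg at hcon
    obtain ⟨T₁, hT₁0, hT₁⟩ := hcon
    set A := {τ : ℝ | 0 ≤ τ ∧ ε ≤ ‖z τ‖} with hA_def
    have hAne : A.Nonempty := ⟨T₁, hT₁0, hT₁⟩
    have hAbdd : BddBelow A := ⟨0, fun τ hτ => hτ.1⟩
    set T := sInf A with hT_def
    have hT0 : 0 ≤ T := le_csInf hAne fun τ hτ => hτ.1
    have hzcont : ∀ τ : ℝ, 0 ≤ τ → ContinuousAt z τ := fun τ hτ => (hz τ hτ).continuousAt
    have hTA : ε ≤ ‖z T‖ := by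
      have hclos : T ∈ closure A := csInf_mem_closure hAne hAbdd
      obtain ⟨u, hu, hulim⟩ := mem_closure_iff_seq_limit.mp hclos
      have hlim : Filter.Tendsto (fun n => ‖z (u n)‖) Filter.atTop (nhds ‖z T‖) :=
        (((hzcont T hT0).tendsto).comp hulim).norm
      exact ge_of_tendsto' hlim fun n => (hu n).2
    have hz0ε : ‖z 0‖ < ε := lt_of_lt_of_le hz0 (min_le_right _ _)
    have hz0δ : ‖z 0‖ < δ := lt_of_lt_of_le hz0 (min_le_left _ _)
    have hTpos : 0 < T := by
      rcases lt_or_eq_of_le hT0 with h | h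
      · exact h
      · exfalso; rw [← h] at hTA; exact absurd hTA (not_le.mpr hz0ε)
    have hlt : ∀ τ : ℝ, 0 ≤ τ → τ < T → ‖z τ‖ < ε := by
      intro τ h0 hτT
      by_contra hge
      push_neg at hge
      exact absurd (csInf_le hAbdd ⟨h0, hge⟩) (not_le.mpr hτT)
    have hTle : ‖z T‖ ≤ ε := by
      have hmem : T ∈ closure (Set.Ico (0:ℝ) T) := by
        rw [closure_Ico hTpos.ne]
        exact Set.right_mem_Icc.mpr hT0
      have hnb : (nhdsWithin T (Set.Ico (0:ℝ) T)).NeBot :=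
        mem_closure_iff_nhdsWithin_neBot.mp hmem
      have hlim : Filter.Tendsto (fun τ => ‖z τ‖) (nhdsWithin T (Set.Ico (0:ℝ) T))
          (nhds ‖z T‖) := ((hzcont T hT0).continuousWithinAt.tendsto).norm
      exact le_of_tendsto hlim
        (eventually_nhdsWithin_of_forall fun τ hτ => (hlt τ hτ.1 hτ.2).le)
    have hTnorm : ‖z T‖ = ε := le_antisymm hTle hTA
    -- V ∘ z is antitone on [0, T]
    have hanti : AntitoneOn (V ∘ z) (Set.Icc 0 T) := by
      apply antitoneOn_of_deriv_nonpos (convex_Icc 0 T)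
      · intro τ hτ
        exact (hVcont.continuousAt.comp (hzcont τ hτ.1)).continuousWithinAt
      · rw [interior_Icc]
        intro τ hτ
        exact (((hVdiff (z τ)).hasFDerivAt.comp_hasDerivAt τ
          (hz τ hτ.1.le)).differentiableAt).differentiableWithinAt
      · rw [interior_Icc]
        intro τ hτ
        have hzd := hz τ hτ.1.le
        have hgr := (hVdiff (z τ)).hasGradientAt
        have hD := hgr.hasFDerivAt.comp_hasDerivAt τ hzd
        have hDval : HasDerivAt (V ∘ z)
            ((inner ℝ (gradient V (z τ)) (f (z τ) (π (z τ)))) : ℝ) τ := by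
          simpa [InnerProductSpace.toDual_apply_apply] using hD
        rw [hDval.deriv]
        refine key (z τ) fun k => hball ?_ k
        rw [mem_ball_zero_iff]
        exact lt_of_lt_of_le (hlt τ hτ.1.le hτ.2) hεr
    have h1 : V (z T) ≤ V (z 0) :=
      hanti (Set.left_mem_Icc.mpr hT0) (Set.right_mem_Icc.mpr hT0) hT0
    have h2 : V (z 0) < m := by
      have hd0 : dist (z 0) (0 : EuclideanSpace ℝ (Fin (dims 0))) < δ := by
        simpa [dist_eq_norm] using hz0δ
      have := hδV hd0
      rw [hV0, dist_zero_right, Real.norm_eq_abs] at this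
      exact lt_of_le_of_lt (le_abs_self _) this
    have h3 : m ≤ V (z T) := isMinOn_iff.mp hz₀min (z T) (by simpa [mem_sphere_iff_norm] using hTnorm)
    linarith
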